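/- Let b, m, u > 0 with u > 4bm and set v_+ = (1 + sqrt(1 - 4bm/u))/(2b), v_- = (1 - sqrt(1 - 4bm/u))/(2b), k = v_+ sqrt(ub)/(2 sqrt 2), and c = (sqrt(2bu)/2)(v_+ - 2v_-). Then the function v(ξ) = (v_+/2)(1 - tanh(kξ)) together with q = v' solves v'' + c v' - mv + (1-bv)uv^2 = 0 on ℝ, with v(ξ) → v_+ as ξ → -∞ and v(ξ) → 0 as ξ → +∞. -/

import Mathlib

open Real Filter

lemma tanh_hasDerivAt (x : ℝ) : HasDerivAt Real.tanh (1 - Real.tanh x ^ 2) x := by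
  have hc : Real.cosh x ≠ 0 := (Real.cosh_pos x).ne'
  have h := (Real.hasDerivAt_sinh x).div (Real.hasDerivAt_cosh x) hc
  have heq : (fun y => Real.sinh y / Real.cosh y) = Real.tanh := by
    funext y; rw [Real.tanh_eq_sinh_div_cosh]
  rw [show Real.sinh / Real.cosh = Real.tanh from heq] at h
  refine h.congr_deriv ?_; symm
  rw [Real.tanh_eq_sinh_div_cosh]
  field_simp

lemma tanh_tendsto_atTop : Tendsto Real.tanh atTop (nhds 1) := by
  have heq : ∀ x : ℝ, Real.tanh x
      = (1 - Real.exp (-(2*x))) / (1 + Real.exp (-(2*x))) := by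
    intro x
    have hE : 0 < Real.exp x := Real.exp_pos x
    rw [Real.tanh_eq_sinh_div_cosh, Real.sinh_eq, Real.cosh_eq]
    have h1 : Real.exp (-x) = (Real.exp x)⁻¹ := Real.exp_neg x
    have h2 : Real.exp (-(2*x)) = ((Real.exp x)⁻¹)^2 := by
      rw [Real.exp_neg]; rw [show (2:ℝ)*x = x + x by ring, Real.exp_add]
      field_simp
    rw [h1, h2]
    have h3 : (0:ℝ) < Real.exp x + (Real.exp x)⁻¹ := by positivity
    have h4 : (0:ℝ) < 1 + ((Real.exp x)⁻¹)^2 := by positivity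
    field_simp
  have hlim : Tendsto (fun x : ℝ => Real.exp (-(2*x))) atTop (nhds 0) := by
    apply Real.tendsto_exp_atBot.comp
    have : Tendsto (fun x : ℝ => (-2) * x) atTop atBot :=
      tendsto_id.const_mul_atTop_of_neg (by norm_num)
    simpa [neg_mul] using this
  have h : Tendsto (fun x : ℝ => (1 - Real.exp (-(2*x))) / (1 + Real.exp (-(2*x))))
      atTop (nhds ((1 - 0) / (1 + 0))) :=
    (tendsto_const_nhds.sub hlim).div (tendsto_const_nhds.add hlim) (by norm_num)
  simp only [sub_zero, add_zero, div_one] at h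
  exact h.congr fun x => (heq x).symm

lemma tanh_tendsto_atBot : Tendsto Real.tanh atBot (nhds (-1)) := by
  have h := (tanh_tendsto_atTop.comp tendsto_neg_atBot_atTop).neg
  simp only [Function.comp] at h
  refine h.congr fun x => ?_
  rw [Real.tanh_neg, neg_neg]

lemma key_alg (b m u vp k c t : ℝ)
    (hk2 : k ^ 2 = vp ^ 2 * u * b / 8)
    (hck : c * k = u * vp * (3 * b * vp - 2) / 4)
    (hroot : u * b * vp ^ 2 - u * vp + m = 0) :
    vp * k ^ 2 * t * (1 - t ^ 2) + c * (-(vp * k / 2) * (1 - t ^ 2))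
      - m * (vp / 2 * (1 - t)) + (1 - b * (vp / 2 * (1 - t))) * u * (vp / 2 * (1 - t)) ^ 2
      = 0 := by
  linear_combination (vp * t * (1 - t ^ 2)) * hk2 - (vp / 2 * (1 - t ^ 2)) * hck
    + (vp * (t - 1) / 2) * hroot

theorem stmt_4 (b m u : ℝ) (hb : 0 < b) (hm : 0 < m) (hu : 4 * b * m < u) :
    let vp : ℝ := (1 + Real.sqrt (1 - 4 * b * m / u)) / (2 * b)
    let vm : ℝ := (1 - Real.sqrt (1 - 4 * b * m / u)) / (2 * b)
    let k : ℝ := vp * Real.sqrt (u * b) / (2 * Real.sqrt 2)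
    let c : ℝ := Real.sqrt (2 * b * u) / 2 * (vp - 2 * vm)
    let v : ℝ → ℝ := fun ξ => vp / 2 * (1 - Real.tanh (k * ξ))
    (∀ ξ : ℝ, deriv (deriv v) ξ + c * deriv v ξ - m * v ξ
        + (1 - b * v ξ) * u * (v ξ) ^ 2 = 0) ∧
    Filter.Tendsto v Filter.atBot (nhds vp) ∧
    Filter.Tendsto v Filter.atTop (nhds 0) := by
  intro vp vm k c v
  have hu0 : 0 < u := lt_trans (by positivity) hu
  have hbm : 4 * b * m / u < 1 := (div_lt_one hu0).mpr hu
  have hS0 : (0:ℝ) ≤ 1 - 4 * b * m / u := by linarith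
  set S : ℝ := Real.sqrt (1 - 4 * b * m / u) with hSdef
  have hS2 : S ^ 2 = 1 - 4 * b * m / u := Real.sq_sqrt hS0
  have hSpos : 0 ≤ S := Real.sqrt_nonneg _
  have hvp_pos : 0 < vp := by
    have h1 : (0:ℝ) < 1 + S := by linarith
    exact div_pos h1 (by positivity)
  have hub : (0:ℝ) ≤ u * b := by positivity
  have hsq2 : Real.sqrt 2 ≠ 0 := by positivity
  have h2 : Real.sqrt 2 ^ 2 = 2 := Real.sq_sqrt (by norm_num)
  have h1 : Real.sqrt (u * b) ^ 2 = u * b := Real.sq_sqrt hub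
  have hk2 : k ^ 2 = vp ^ 2 * u * b / 8 := by
    show (vp * Real.sqrt (u * b) / (2 * Real.sqrt 2)) ^ 2 = vp ^ 2 * u * b / 8
    rw [div_pow, mul_pow, mul_pow, h1, h2]
    ring
  have hck : c * k = u * vp * (3 * b * vp - 2) / 4 := by
    have hmul : Real.sqrt (2 * b * u) * Real.sqrt (u * b) = Real.sqrt 2 * (u * b) := by
      rw [← Real.sqrt_mul (by positivity) (u * b)]
      rw [show 2 * b * u * (u * b) = 2 * (u * b) ^ 2 by ring]
      rw [Real.sqrt_mul (by norm_num) ((u*b)^2), Real.sqrt_sq hub]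
    have hvm : vp - 2 * vm = (3 * S - 1) / (2 * b) := by
      show (1 + S) / (2 * b) - 2 * ((1 - S) / (2 * b)) = (3 * S - 1) / (2 * b)
      field_simp; ring
    have hvp3 : 3 * b * vp - 2 = (3 * S - 1) / 2 := by
      show 3 * b * ((1 + S) / (2 * b)) - 2 = (3 * S - 1) / 2
      field_simp; ring
    have hstep : c * k
        = Real.sqrt (2*b*u) * Real.sqrt (u*b) * (vp * (3*S-1)) / (8 * b * Real.sqrt 2) := by
      show Real.sqrt (2 * b * u) / 2 * (vp - 2 * vm) * (vp * Real.sqrt (u * b) / (2 * Real.sqrt 2)) = _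
      rw [hvm]; field_simp; ring
    rw [hstep, hmul, hvp3]
    field_simp
    ring
  have hroot : u * b * vp ^ 2 - u * vp + m = 0 := by
    have hS2' : u * S ^ 2 = u - 4 * b * m := by
      rw [hS2]; field_simp
    show u * b * ((1 + S) / (2 * b)) ^ 2 - u * ((1 + S) / (2 * b)) + m = 0
    field_simp
    linear_combination hS2'
  -- derivatives
  have hg : ∀ ξ : ℝ, HasDerivAt (fun ξ : ℝ => Real.tanh (k * ξ))
      ((1 - Real.tanh (k * ξ) ^ 2) * k) ξ := by
    intro ξ
    have hin : HasDerivAt (fun x : ℝ => k * x) k ξ := by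
      simpa using (hasDerivAt_id ξ).const_mul k
    exact (tanh_hasDerivAt (k * ξ)).comp ξ hin
  have hv : ∀ ξ : ℝ, HasDerivAt v (vp / 2 * (-((1 - Real.tanh (k * ξ) ^ 2) * k))) ξ :=
    fun ξ => ((hg ξ).const_sub 1).const_mul (vp / 2)
  have hdv : deriv v = fun ξ => vp / 2 * (-((1 - Real.tanh (k * ξ) ^ 2) * k)) :=
    funext fun ξ => (hv ξ).deriv
  have hv2 : ∀ ξ : ℝ, HasDerivAt (fun ξ => vp / 2 * (-((1 - Real.tanh (k * ξ) ^ 2) * k)))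
      (vp / 2 * (-((-(2 * Real.tanh (k * ξ) ^ 1 * ((1 - Real.tanh (k * ξ) ^ 2) * k))) * k))) ξ := by
    intro ξ
    exact ((((hg ξ).pow 2).const_sub 1).mul_const k).neg.const_mul (vp / 2)
  refine ⟨fun ξ => ?_, ?_, ?_⟩
  · rw [hdv]
    rw [(hv2 ξ).deriv]
    have hkey := key_alg b m u vp k c (Real.tanh (k * ξ)) hk2 hck hroot
    show vp / 2 * (-(-(2 * Real.tanh (k * ξ) ^ 1 * ((1 - Real.tanh (k * ξ) ^ 2) * k)) * k))
        + c * (vp / 2 * (-((1 - Real.tanh (k * ξ) ^ 2) * k)))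
        - m * (vp / 2 * (1 - Real.tanh (k * ξ)))
        + (1 - b * (vp / 2 * (1 - Real.tanh (k * ξ)))) * u
          * (vp / 2 * (1 - Real.tanh (k * ξ))) ^ 2 = 0
    linear_combination hkey
  · have hkpos : 0 < k :=
      div_pos (mul_pos hvp_pos (Real.sqrt_pos.mpr (by positivity))) (by positivity)
    have hkbot : Tendsto (fun ξ : ℝ => k * ξ) atBot atBot := by
      exact tendsto_id.const_mul_atBot hkpos
    have ht : Tendsto (fun ξ : ℝ => Real.tanh (k * ξ)) atBot (nhds (-1)) :=
      tanh_tendsto_atBot.comp hkbot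
    have h := (((tendsto_const_nhds : Tendsto (fun _ : ℝ => (1:ℝ)) atBot (nhds 1))).sub ht).const_mul (vp / 2)
    convert h using 2
    ring
  · have hkpos : 0 < k :=
      div_pos (mul_pos hvp_pos (Real.sqrt_pos.mpr (by positivity))) (by positivity)
    have hktop : Tendsto (fun ξ : ℝ => k * ξ) atTop atTop := by
      exact tendsto_id.const_mul_atTop hkpos
    have ht : Tendsto (fun ξ : ℝ => Real.tanh (k * ξ)) atTop (nhds 1) :=
      tanh_tendsto_atTop.comp hktop
    have h := (((tendsto_const_nhds : Tendsto (fun _ : ℝ => (1:ℝ)) atTop (nhds 1))).sub ht).const_mul (vp / 2)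
    convert h using 2
    ring
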